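/- Let M be a real symmetric positive definite n×n matrix, A (n×n), B (n×m), K (m×n), D (n×r), P (n×n̂), B̂ (n̂×m̂), R (m×m̂) real matrices, and ε > 0, κ > 0 with (1 + 1/ε + ε)(A + B K)ᵀ M (A + B K) ⪯ κ M (Loewner order). Then for all e ∈ ℝⁿ, δ ∈ ℝ^{r}, û ∈ ℝ^{m̂}: ((A+BK)e + Dδ + (BR − PB̂)û)ᵀ M ((A+BK)e + Dδ + (BR − PB̂)û) ≤ κ eᵀ M e + (1 + ε + 1/ε)(‖M^{1/2} D δ‖² + ‖M^{1/2}(BR − PB̂) û‖²), where ‖·‖ is the Euclidean norm and M^{1/2} the positive semidefinite square root of M. -/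

import Mathlib

open Matrix
open scoped MatrixOrder

/-- The Euclidean norm of a vector in `ℝⁿ`. -/
noncomputable def euclNorm {n : ℕ} (v : Fin n → ℝ) : ℝ :=
  ‖(WithLp.equiv 2 (Fin n → ℝ)).symm v‖

lemma dot_self_nonneg' {k : ℕ} (x : Fin k → ℝ) : 0 ≤ x ⬝ᵥ x := by
  simp only [dotProduct, ← sq]
  exact Finset.sum_nonneg fun i _ => sq_nonneg _

lemma euclNorm_sq {k : ℕ} (v : Fin k → ℝ) : euclNorm v ^ 2 = v ⬝ᵥ v := by
  rw [euclNorm, EuclideanSpace.norm_eq, Real.sq_sqrt (by positivity)]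
  simp [dotProduct, sq]

lemma three_vec_bound {k : ℕ} (a b c : Fin k → ℝ) {c₀ : ℝ} (hc : 3 ≤ c₀) :
    (a + b + c) ⬝ᵥ (a + b + c) ≤ c₀ * (a ⬝ᵥ a + b ⬝ᵥ b + c ⬝ᵥ c) := by
  have hab : 2 * (a ⬝ᵥ b) ≤ a ⬝ᵥ a + b ⬝ᵥ b := by
    have := dot_self_nonneg' (a - b)
    simp only [sub_dotProduct, dotProduct_sub, dotProduct_comm b a] at this
    linarith
  have hac : 2 * (a ⬝ᵥ c) ≤ a ⬝ᵥ a + c ⬝ᵥ c := by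
    have := dot_self_nonneg' (a - c)
    simp only [sub_dotProduct, dotProduct_sub, dotProduct_comm c a] at this
    linarith
  have hbc : 2 * (b ⬝ᵥ c) ≤ b ⬝ᵥ b + c ⬝ᵥ c := by
    have := dot_self_nonneg' (b - c)
    simp only [sub_dotProduct, dotProduct_sub, dotProduct_comm c b] at this
    linarith
  have ha := dot_self_nonneg' a
  have hb := dot_self_nonneg' b
  have hcn := dot_self_nonneg' c
  have expand : (a + b + c) ⬝ᵥ (a + b + c) =
      a ⬝ᵥ a + b ⬝ᵥ b + c ⬝ᵥ c + 2 * (a ⬝ᵥ b) + 2 * (a ⬝ᵥ c) + 2 * (b ⬝ᵥ c) := by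
    simp only [add_dotProduct, dotProduct_add, dotProduct_comm b a,
      dotProduct_comm c a, dotProduct_comm c b]
    ring
  nlinarith [hab, hac, hbc, ha, hb, hcn]

/-- Single-mode decrease estimate in the linear construction: if
`(1 + 1/ε + ε)(A + B K)ᵀ M (A + B K) ⪯ κ M` (Loewner order), then the quadratic
form (w.r.t. `M`) of the next-step error `(A+BK) e + D δ + (B R - P B̂) û` is
bounded by `κ` times the current quadratic form plus gain terms in `δ` and `û`,
where `M^{1/2}` denotes the positive semidefinite square root of `M`. -/
theorem single_mode_decrease {n m nh mh r : ℕ}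
    (M : Matrix (Fin n) (Fin n) ℝ) (hM : M.PosDef)
    (A : Matrix (Fin n) (Fin n) ℝ) (B : Matrix (Fin n) (Fin m) ℝ)
    (K : Matrix (Fin m) (Fin n) ℝ) (D : Matrix (Fin n) (Fin r) ℝ)
    (P : Matrix (Fin n) (Fin nh) ℝ) (Bh : Matrix (Fin nh) (Fin mh) ℝ)
    (R : Matrix (Fin m) (Fin mh) ℝ)
    (ε κ : ℝ) (hε : 0 < ε) (hκ : 0 < κ)
    (hLoewner :
      (κ • M - (1 + 1 / ε + ε) • ((A + B * K)ᵀ * M * (A + B * K))).PosSemidef) :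
    ∀ (e : Fin n → ℝ) (δ : Fin r → ℝ) (uh : Fin mh → ℝ),
      ((A + B * K).mulVec e + D.mulVec δ + (B * R - P * Bh).mulVec uh) ⬝ᵥ
          M.mulVec
            ((A + B * K).mulVec e + D.mulVec δ + (B * R - P * Bh).mulVec uh) ≤
        κ * (e ⬝ᵥ M.mulVec e) +
          (1 + ε + 1 / ε) *
            (euclNorm ((CFC.sqrt M * D).mulVec δ) ^ 2 +
              euclNorm ((CFC.sqrt M * (B * R - P * Bh)).mulVec uh) ^ 2) := by
  intro e δ uh
  set T := CFC.sqrt M with hT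
  have hTsym : Tᵀ = T := (Matrix.nonneg_iff_posSemidef.mp (CFC.sqrt_nonneg M)).1
  have hTT : T * T = M := CFC.sqrt_mul_sqrt_self M (Matrix.nonneg_iff_posSemidef.mpr hM.posSemidef)
  -- quadratic form as squared norm of T ∙ v
  have key : ∀ v : Fin n → ℝ, v ⬝ᵥ M.mulVec v = (T.mulVec v) ⬝ᵥ (T.mulVec v) := by
    intro v
    rw [← hTT, ← mulVec_mulVec, dotProduct_mulVec]
    conv_lhs => rw [← hTsym]
    rw [vecMul_transpose, hTsym]
  set a := T.mulVec ((A + B * K).mulVec e)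
  set b := T.mulVec (D.mulVec δ)
  set c := T.mulVec ((B * R - P * Bh).mulVec uh)
  have hsum : T.mulVec ((A + B * K).mulVec e + D.mulVec δ + (B * R - P * Bh).mulVec uh)
      = a + b + c := by
    simp [a, b, c, mulVec_add]
  have hLHS : ((A + B * K).mulVec e + D.mulVec δ + (B * R - P * Bh).mulVec uh) ⬝ᵥ
      M.mulVec ((A + B * K).mulVec e + D.mulVec δ + (B * R - P * Bh).mulVec uh)
      = (a + b + c) ⬝ᵥ (a + b + c) := by
    rw [key, hsum]
  set c₀ := 1 + ε + 1 / ε with hc₀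
  have hc3 : 3 ≤ c₀ := by
    have h2 : 2 ≤ ε + 1 / ε := by
      rw [← sub_nonneg]
      have hq : ε + 1 / ε - 2 = (ε - 1) ^ 2 / ε := by field_simp; ring
      rw [hq]; positivity
    simp only [hc₀]; linarith
  have hmain := three_vec_bound a b c hc3
  -- bound a ⬝ a via Loewner
  have haq : a ⬝ᵥ a = e ⬝ᵥ ((A + B * K)ᵀ * M * (A + B * K)).mulVec e := by
    have h1 : e ⬝ᵥ ((A + B * K)ᵀ * M * (A + B * K)).mulVec e
        = ((A + B * K).mulVec e) ⬝ᵥ M.mulVec ((A + B * K).mulVec e) := by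
      rw [Matrix.mul_assoc, ← mulVec_mulVec, dotProduct_mulVec, vecMul_transpose,
        ← mulVec_mulVec]
    rw [h1]; exact (key _).symm
  have hLoew : c₀ * (a ⬝ᵥ a) ≤ κ * (e ⬝ᵥ M.mulVec e) := by
    have h0 := hLoewner.dotProduct_mulVec_nonneg e
    simp only [star_trivial] at h0
    have h0' : (0:ℝ) ≤ e ⬝ᵥ (κ • M - (1 + 1 / ε + ε) •
        ((A + B * K)ᵀ * M * (A + B * K))).mulVec e := by
      simpa using h0
    rw [sub_mulVec, dotProduct_sub, smul_mulVec, smul_mulVec,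
      dotProduct_smul, dotProduct_smul] at h0'
    rw [haq, hc₀]
    simp only [smul_eq_mul] at h0'
    linarith
  -- rewrite b, c norms
  have hbq : euclNorm ((CFC.sqrt M * D).mulVec δ) ^ 2 = b ⬝ᵥ b := by
    rw [euclNorm_sq, ← mulVec_mulVec]
  have hcq : euclNorm ((CFC.sqrt M * (B * R - P * Bh)).mulVec uh) ^ 2
      = c ⬝ᵥ c := by
    rw [euclNorm_sq, ← mulVec_mulVec]
  rw [hLHS, hbq, hcq]
  calc (a + b + c) ⬝ᵥ (a + b + c) ≤ c₀ * (a ⬝ᵥ a + b ⬝ᵥ b + c ⬝ᵥ c) := hmain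
    _ = c₀ * (a ⬝ᵥ a) + c₀ * (b ⬝ᵥ b + c ⬝ᵥ c) := by ring
    _ ≤ κ * (e ⬝ᵥ M.mulVec e) + c₀ * (b ⬝ᵥ b + c ⬝ᵥ c) := by linarith
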